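/- arXiv:1103.0877 — 3 statements merged into one kernel-verified Lean document; each statement's English description precedes it below -/
import Mathlib

section
/- Let X ⊆ ℝ² be a compact convex body with 0 in its interior. The set of boundary points x of X at which X admits at least two distinct supporting lines (equivalently, points that are 1-singular: the exposed face of X* relative to x has affine dimension ≥ 1) is at most countable. -/
open scoped RealInnerProductSpace MeasureTheory

/-- The polar (dual) body of a set in Euclidean space, identified with a subset of the
same space via the inner product. -/
def polarBody {n : ℕ} (X : Set (EuclideanSpace ℝ (Fin n))) : Set (EuclideanSpace ℝ (Fin n)) :=
  {f | ∀ x ∈ X, ⟪f, x⟫ ≤ 1}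

/-- In the plane, two distinct functionals cannot both be equal to `1` at two distinct points. -/
lemma key_two_functionals {f g x y : EuclideanSpace ℝ (Fin 2)} (hfg : f ≠ g)
    (hfx : ⟪f, x⟫ = 1) (hgx : ⟪g, x⟫ = 1) (hfy : ⟪f, y⟫ = 1) (hgy : ⟪g, y⟫ = 1) :
    x = y := by
  have hd : f - g ≠ 0 := sub_ne_zero.mpr hfg
  set W := (ℝ ∙ (f - g))ᗮ with hW
  have hxW : x ∈ W := by
    rw [hW, Submodule.mem_orthogonal_singleton_iff_inner_right, inner_sub_left, hfx, hgx]
    ring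
  have hyW : y ∈ W := by
    rw [hW, Submodule.mem_orthogonal_singleton_iff_inner_right, inner_sub_left, hfy, hgy]
    ring
  have hx0 : x ≠ 0 := by
    rintro rfl
    simp [inner_zero_right] at hfx
  have hfin : Module.finrank ℝ W = 1 := by
    have h1 := Submodule.finrank_add_finrank_orthogonal (K := ℝ ∙ (f - g)) (𝕜 := ℝ)
    rw [finrank_span_singleton hd, finrank_euclideanSpace_fin] at h1
    exact Nat.add_left_cancel h1
  have hspan : (ℝ ∙ x) = W := by
    apply Submodule.eq_of_le_of_finrank_le
    · rwa [Submodule.span_singleton_le_iff_mem]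
    · rw [hfin, finrank_span_singleton hx0]
  rw [← hspan, Submodule.mem_span_singleton] at hyW
  obtain ⟨a, rfl⟩ := hyW
  rw [real_inner_smul_right, hfx, mul_one] at hfy
  rw [hfy, one_smul]

theorem singular_points_countable_dim_two (X : Set (EuclideanSpace ℝ (Fin 2)))
    (hXc : IsCompact X) (hXv : Convex ℝ X) (h0 : 0 ∈ interior X) :
    {x ∈ frontier X | ∃ f g : EuclideanSpace ℝ (Fin 2), f ≠ g ∧
      f ∈ polarBody X ∧ g ∈ polarBody X ∧ ⟪f, x⟫ = 1 ∧ ⟪g, x⟫ = 1}.Countable := by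
  classical
  set S : Set (EuclideanSpace ℝ (Fin 2)) := {x ∈ frontier X | ∃ f g : EuclideanSpace ℝ (Fin 2),
      f ≠ g ∧ f ∈ polarBody X ∧ g ∈ polarBody X ∧ ⟪f, x⟫ = 1 ∧ ⟪g, x⟫ = 1} with hSdef
  have hfrX : frontier X ⊆ X := by
    intro z hz
    exact hXc.isClosed.closure_eq ▸ frontier_subset_closure hz
  -- choose the pair of functionals at each singular point
  have hch : ∀ x ∈ S, ∃ fg : EuclideanSpace ℝ (Fin 2) × EuclideanSpace ℝ (Fin 2), fg.1 ≠ fg.2 ∧ fg.1 ∈ polarBody X ∧ fg.2 ∈ polarBody X ∧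
      ⟪fg.1, x⟫ = 1 ∧ ⟪fg.2, x⟫ = 1 := by
    rintro x ⟨-, f, g, h⟩
    exact ⟨(f, g), h⟩
  choose! FG hFGne hFGf hFGg hFGfx hFGgx using hch
  -- the associated open cone at each singular point
  have hindep : ∀ x ∈ S, LinearIndependent ℝ ![(FG x).1, (FG x).2] := by
    intro x hx
    rw [LinearIndependent.pair_iff]
    intro s t hst
    have h1 : s + t = 0 := by
      have h := congrArg (fun z : EuclideanSpace ℝ (Fin 2) => ⟪z, x⟫) hst
      simp only [inner_add_left, real_inner_smul_left, inner_zero_left] at h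
      rw [hFGfx x hx, hFGgx x hx] at h
      linarith
    have h2 : s • ((FG x).1 - (FG x).2) = 0 := by
      have ht : t = -s := by linarith
      rw [(by rw [ht]; module : s • ((FG x).1 - (FG x).2) = s • (FG x).1 + t • (FG x).2), hst]
    rcases smul_eq_zero.mp h2 with h | h
    · constructor <;> [exact h; linarith]
    · exact absurd (sub_eq_zero.mp h) (hFGne x hx)
  -- coordinates with respect to the basis ((FG x).1, (FG x).2)
  have hcard : Fintype.card (Fin 2) = Module.finrank ℝ (EuclideanSpace ℝ (Fin 2)) := by
    simp [finrank_euclideanSpace_fin]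
  -- For x ∈ S, define the open cone U x
  have main : ∀ x ∈ S, ∃ U : Set (EuclideanSpace ℝ (Fin 2)), IsOpen U ∧ U.Nonempty ∧
      ∀ h ∈ U, ∃ u v : ℝ, 0 < u ∧ 0 < v ∧ h = u • (FG x).1 + v • (FG x).2 := by
    intro x hx
    set B := basisOfLinearIndependentOfCardEqFinrank (hindep x hx) hcard with hB
    have hB0 : B 0 = (FG x).1 := by rw [hB, coe_basisOfLinearIndependentOfCardEqFinrank]; rfl
    have hB1 : B 1 = (FG x).2 := by rw [hB, coe_basisOfLinearIndependentOfCardEqFinrank]; rfl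
    refine ⟨{h | 0 < B.equivFun h 0 ∧ 0 < B.equivFun h 1}, ?_, ?_, ?_⟩
    · have hc : Continuous (B.equivFun : EuclideanSpace ℝ (Fin 2) →ₗ[ℝ] (Fin 2 → ℝ)) :=
        LinearMap.continuous_of_finiteDimensional _
      exact IsOpen.inter
        (isOpen_lt continuous_const ((continuous_apply 0).comp hc))
        (isOpen_lt continuous_const ((continuous_apply 1).comp hc))
    · refine ⟨B.equivFun.symm ![1, 1], ?_⟩
      simp only [Set.mem_setOf_eq, LinearEquiv.apply_symm_apply]
      norm_num
    · rintro h ⟨h0, h1⟩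
      refine ⟨B.equivFun h 0, B.equivFun h 1, h0, h1, ?_⟩
      conv_lhs => rw [← B.equivFun.symm_apply_apply h]
      rw [Module.Basis.equivFun_symm_apply, Fin.sum_univ_two, hB0, hB1]
  choose! U hUopen hUne hUmem using main
  -- key: any element of U x determines x (for x ∈ S)
  have hdisj : ∀ x ∈ S, ∀ y ∈ S, ∀ h, h ∈ U x → h ∈ U y → x = y := by
    intro x hx y hy h hhx hhy
    obtain ⟨u, v, hu, hv, huv⟩ := hUmem x hx h hhx
    obtain ⟨u', v', hu', hv', huv'⟩ := hUmem y hy h hhy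
    have hxX : x ∈ X := hfrX hx.1
    have hyX : y ∈ X := hfrX hy.1
    have hs : (0:ℝ) < u + v := by linarith
    have hs' : (0:ℝ) < u' + v' := by linarith
    have hhxin : ⟪h, x⟫ = u + v := by
      rw [huv, inner_add_left, real_inner_smul_left, real_inner_smul_left,
        hFGfx x hx, hFGgx x hx]; ring
    have hhyin : ⟪h, y⟫ = u' + v' := by
      rw [huv', inner_add_left, real_inner_smul_left, real_inner_smul_left,
        hFGfx y hy, hFGgx y hy]; ring
    -- ⟪h, y⟫ ≤ u + v  since h/(u+v) ∈ polarBody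
    have hbound : ∀ z ∈ X, ⟪h, z⟫ ≤ u + v := by
      intro z hz
      have := hFGf x hx z hz
      have := hFGg x hx z hz
      rw [huv, inner_add_left, real_inner_smul_left, real_inner_smul_left]
      nlinarith
    have hbound' : ∀ z ∈ X, ⟪h, z⟫ ≤ u' + v' := by
      intro z hz
      have := hFGf y hy z hz
      have := hFGg y hy z hz
      rw [huv', inner_add_left, real_inner_smul_left, real_inner_smul_left]
      nlinarith
    have hsum : u + v = u' + v' := by
      have h1 := hbound y hyX
      have h2 := hbound' x hxX
      rw [hhyin] at h1; rw [hhxin] at h2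
      linarith
    -- then both (FG x).1 and (FG x).2 take value 1 at y
    have hfy : ⟪(FG x).1, y⟫ = 1 ∧ ⟪(FG x).2, y⟫ = 1 := by
      have h1 : u * ⟪(FG x).1, y⟫ + v * ⟪(FG x).2, y⟫ = u + v := by
        have := hhyin
        rw [huv, inner_add_left, real_inner_smul_left, real_inner_smul_left] at this
        linarith [hsum]
      have h2 := hFGf x hx y hyX
      have h3 := hFGg x hx y hyX
      constructor <;> nlinarith
    exact key_two_functionals (hFGne x hx) (hFGfx x hx) (hFGgx x hx) hfy.1 hfy.2
  -- conclude countability using a countable dense set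
  obtain ⟨D, hDc, hDd⟩ := TopologicalSpace.exists_countable_dense (EuclideanSpace ℝ (Fin 2))
  have hpick : ∀ x ∈ S, ∃ d ∈ D, d ∈ U x :=
    fun x hx => hDd.exists_mem_open (hUopen x hx) (hUne x hx)
  choose! d hdD hdU using hpick
  exact Set.MapsTo.countable_of_injOn (fun x hx => hdD x hx)
    (fun x hx y hy hxy => hdisj x hx y hy (d x) (hdU x hx) (hxy ▸ hdU y hy)) hDc
end

section
/- Let X ⊆ ℝⁿ be a compact convex body with 0 in its interior. The set of boundary points x ∈ ∂X at which the set of supporting functionals {f ∈ X* : f(x) = 1} has affine dimension n − 1 (the maximum possible), i.e., the set of (n−1)-singular points of X, is at most countable. -/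
open scoped RealInnerProductSpace MeasureTheory

section Aux

variable {n : ℕ}

local notation "E" => EuclideanSpace ℝ (Fin n)

lemma support_exists {X : Set E} (hXc : IsCompact X) (hXv : Convex ℝ X)
    (h0 : 0 ∈ interior X) {x : E} (hx : x ∈ frontier X) :
    ∃ f : E, ⟪f, x⟫ = 1 ∧ ∀ z ∈ X, ⟪f, z⟫ ≤ 1 := by
  obtain ⟨f, hf⟩ := geometric_hahn_banach_open_point hXv.interior isOpen_interior hx.2
  have hfx : 0 < f x := by have := hf 0 h0; simpa using this
  have hle : ∀ z ∈ X, f z ≤ f x := by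
    intro z hz
    by_contra h
    push_neg at h
    have hfz : 0 < f z := hfx.trans h
    have ht0 : 0 < f x / f z := div_pos hfx hfz
    have ht1 : f x / f z < 1 := (div_lt_one hfz).2 h
    have hmem : (f x / f z) • z ∈ interior X := by
      have := hXv.combo_interior_closure_mem_interior h0 (subset_closure hz)
        (a := 1 - f x / f z) (b := f x / f z) (by linarith) ht0.le (by ring)
      simpa using this
    have hlt := hf _ hmem
    rw [map_smul, smul_eq_mul, div_mul_cancel₀ _ hfz.ne'] at hlt
    exact lt_irrefl _ hlt
  set v := (InnerProductSpace.toDual ℝ E).symm f with hv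
  have hvz : ∀ z : E, ⟪v, z⟫ = f z := fun z => InnerProductSpace.toDual_symm_apply
  refine ⟨(f x)⁻¹ • v, ?_, ?_⟩
  · rw [real_inner_smul_left, hvz, inv_mul_cancel₀ hfx.ne']
  · intro z hz
    rw [real_inner_smul_left, hvz]
    rw [← div_eq_inv_mul, div_le_one hfx]
    exact hle z hz

lemma relint_exists {X : Set E} (hXc : IsCompact X) (hXv : Convex ℝ X)
    (h0 : 0 ∈ interior X) {x : E} (hx : x ∈ frontier X)
    (hrank : Module.finrank ℝ (affineSpan ℝ {f ∈ polarBody X | ⟪f, x⟫ = 1}).direction = n - 1) :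
    ∃ ε > 0, ∃ f₀ ∈ {f ∈ polarBody X | ⟪f, x⟫ = 1},
      ∀ g : E, ⟪g, x⟫ = 1 → ‖g - f₀‖ < ε → g ∈ {f ∈ polarBody X | ⟪f, x⟫ = 1} := by
  set F := {f ∈ polarBody X | ⟪f, x⟫ = 1} with hF
  have hx0 : x ≠ 0 := fun h => hx.2 (by rw [h]; exact h0)
  have hFne : F.Nonempty := by
    obtain ⟨f, h1, h2⟩ := support_exists hXc hXv h0 hx
    exact ⟨f, fun z hz => h2 z hz, h1⟩
  have hFcv : Convex ℝ F := by
    intro f hf g hg a b ha hb hab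
    constructor
    · intro z hz
      have h1 := hf.1 z hz
      have h2 := hg.1 z hz
      calc ⟪a • f + b • g, z⟫ = a * ⟪f, z⟫ + b * ⟪g, z⟫ := by
            rw [inner_add_left, real_inner_smul_left, real_inner_smul_left]
        _ ≤ a * 1 + b * 1 := by
            gcongr <;> assumption
        _ = 1 := by linarith
    · rw [inner_add_left, real_inner_smul_left, real_inner_smul_left, hf.2, hg.2]
      linarith
  set p : E := (‖x‖ ^ 2)⁻¹ • x with hp
  have hnx : (0:ℝ) < ‖x‖ ^ 2 := pow_pos (norm_pos_iff.mpr hx0) 2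
  have hpx : ⟪p, x⟫ = 1 := by
    rw [hp, real_inner_smul_left, real_inner_self_eq_norm_sq, inv_mul_cancel₀ hnx.ne']
  set H := AffineSubspace.mk' p ((ℝ ∙ x)ᗮ) with hH
  have hmemH : ∀ z : E, z ∈ H ↔ ⟪z, x⟫ = 1 := by
    intro z
    rw [hH, AffineSubspace.mem_mk', vsub_eq_sub,
      Submodule.mem_orthogonal_singleton_iff_inner_left, inner_sub_left, hpx, sub_eq_zero]
  have hAH : affineSpan ℝ F ≤ H := affineSpan_le.mpr (fun f hf => (hmemH f).mpr hf.2)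
  have hdirH : H.direction = (ℝ ∙ x)ᗮ := AffineSubspace.direction_mk' _ _
  have hrk1 : Module.finrank ℝ (ℝ ∙ x) = 1 := finrank_span_singleton hx0
  have hsum := Submodule.finrank_add_finrank_orthogonal (K := (ℝ ∙ x))
  have hn : Module.finrank ℝ E = n := finrank_euclideanSpace_fin
  have hdim : Module.finrank ℝ ((ℝ ∙ x)ᗮ : Submodule ℝ E) = n - 1 := by omega
  have hdireq : (affineSpan ℝ F).direction = H.direction := by
    apply Submodule.eq_of_le_of_finrank_eq (AffineSubspace.direction_le hAH)
    rw [hrank, hdirH, hdim]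
  have hAeq : affineSpan ℝ F = H := by
    obtain ⟨f₁, hf₁⟩ := hFne
    exact AffineSubspace.ext_of_direction_eq hdireq
      ⟨f₁, subset_affineSpan ℝ F hf₁, (hmemH f₁).mpr hf₁.2⟩
  obtain ⟨f₀, hf₀⟩ := hFne.intrinsicInterior hFcv
  rw [mem_intrinsicInterior] at hf₀
  obtain ⟨y, hy, hyx⟩ := hf₀
  rw [mem_interior_iff_mem_nhds, Metric.mem_nhds_iff] at hy
  obtain ⟨ε, hε, hball⟩ := hy
  refine ⟨ε, hε, f₀, ?_, ?_⟩
  · have := hball (Metric.mem_ball_self hε)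
    rwa [Set.mem_preimage, hyx] at this
  · intro g hg1 hg2
    have hgH : g ∈ affineSpan ℝ F := by rw [hAeq]; exact (hmemH g).mpr hg1
    have hmem : (⟨g, hgH⟩ : affineSpan ℝ F) ∈ Metric.ball y ε := by
      rw [Metric.mem_ball, Subtype.dist_eq, dist_eq_norm]
      simpa [hyx] using hg2
    have := hball hmem
    rwa [Set.mem_preimage] at this

end Aux

theorem top_singular_points_countable {n : ℕ} (X : Set (EuclideanSpace ℝ (Fin n)))
    (hXc : IsCompact X) (hXv : Convex ℝ X) (h0 : 0 ∈ interior X) :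
    {x ∈ frontier X |
      Module.finrank ℝ (affineSpan ℝ {f ∈ polarBody X | ⟪f, x⟫ = 1}).direction
        = n - 1}.Countable := by
  classical
  set S := {x ∈ frontier X |
      Module.finrank ℝ (affineSpan ℝ {f ∈ polarBody X | ⟪f, x⟫ = 1}).direction = n - 1} with hS
  -- predicate: z is in the open cone over the relative interior of the exposed face of x
  set P : (EuclideanSpace ℝ (Fin n)) → (EuclideanSpace ℝ (Fin n)) → Prop := fun x z =>
    ∃ ε > (0:ℝ), ∃ f₀ ∈ {f ∈ polarBody X | ⟪f, x⟫ = 1},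
      (∀ g : EuclideanSpace ℝ (Fin n), ⟪g, x⟫ = 1 → ‖g - f₀‖ < ε → g ∈ {f ∈ polarBody X | ⟪f, x⟫ = 1}) ∧
      0 < ⟪z, x⟫ ∧ ‖(⟪z, x⟫)⁻¹ • z - f₀‖ < ε with hP
  obtain ⟨D, hDc, hDd⟩ := TopologicalSpace.exists_countable_dense (EuclideanSpace ℝ (Fin n))
  -- Claim 1: every x in S sees some z in D
  have claim1 : ∀ x ∈ S, ∃ z ∈ D, P x z := by
    intro x hxS
    obtain ⟨ε, hε, f₀, hf₀F, hrel⟩ := relint_exists hXc hXv h0 hxS.1 hxS.2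
    set C : Set (EuclideanSpace ℝ (Fin n)) := {z | 0 < ⟪z, x⟫} ∩
      (fun z => (⟪z, x⟫)⁻¹ • z) ⁻¹' Metric.ball f₀ ε with hC
    have hocone : IsOpen {z : (EuclideanSpace ℝ (Fin n)) | 0 < ⟪z, x⟫} :=
      isOpen_lt continuous_const (Continuous.inner continuous_id continuous_const)
    have hCopen : IsOpen C := by
      apply ContinuousOn.isOpen_inter_preimage ?_ hocone Metric.isOpen_ball
      apply ContinuousOn.fun_smul
      · exact ContinuousOn.inv₀
          ((Continuous.inner continuous_id continuous_const).continuousOn)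
          (fun z hz => ne_of_gt hz)
      · exact continuousOn_id
    have hCne : C.Nonempty := by
      refine ⟨f₀, ?_, ?_⟩
      · show 0 < ⟪f₀, x⟫
        rw [hf₀F.2]; norm_num
      · simp only [Set.mem_preimage, Metric.mem_ball, hf₀F.2]
        simpa [dist_eq_norm] using hε
    obtain ⟨z, hzD, hzC⟩ := hDd.exists_mem_open hCopen hCne
    refine ⟨z, hzD, ε, hε, f₀, hf₀F, hrel, hzC.1, ?_⟩
    have := hzC.2
    simpa [dist_eq_norm] using this
  -- Claim 2: P x z and P y z imply x = y
  have claim2 : ∀ x ∈ S, ∀ y ∈ S, ∀ z : EuclideanSpace ℝ (Fin n), P x z → P y z → x = y := by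
    intro x hxS y hyS z hPx hPy
    obtain ⟨εx, hεx, fx, hfxF, hrelx, htx, hnx⟩ := hPx
    obtain ⟨εy, hεy, fy, hfyF, hrely, hty, hny⟩ := hPy
    have hxX : x ∈ X := hXc.isClosed.closure_eq ▸ hxS.1.1
    have hyX : y ∈ X := hXc.isClosed.closure_eq ▸ hyS.1.1
    set t := ⟪z, x⟫ with ht
    set s := ⟪z, y⟫ with hs
    set f : (EuclideanSpace ℝ (Fin n)) := t⁻¹ • z with hf
    set g : (EuclideanSpace ℝ (Fin n)) := s⁻¹ • z with hg
    have hfx1 : ⟪f, x⟫ = 1 := by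
      rw [hf, real_inner_smul_left, ← ht, inv_mul_cancel₀ htx.ne']
    have hgy1 : ⟪g, y⟫ = 1 := by
      rw [hg, real_inner_smul_left, ← hs, inv_mul_cancel₀ hty.ne']
    have hfF : f ∈ {f ∈ polarBody X | ⟪f, x⟫ = 1} := hrelx f hfx1 hnx
    have hgF : g ∈ {f ∈ polarBody X | ⟪f, y⟫ = 1} := hrely g hgy1 hny
    -- t = s
    have hst : s ≤ t := by
      have h1 : ⟪f, y⟫ ≤ 1 := hfF.1 y hyX
      rw [hf, real_inner_smul_left, ← hs] at h1
      exact (inv_mul_le_one₀ htx).mp h1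
    have hts : t ≤ s := by
      have h1 : ⟪g, x⟫ ≤ 1 := hgF.1 x hxX
      rw [hg, real_inner_smul_left, ← ht] at h1
      exact (inv_mul_le_one₀ hty).mp h1
    have hteq : t = s := le_antisymm hts hst
    have hfy1 : ⟪f, y⟫ = 1 := by
      rw [hf, real_inner_smul_left, ← hs, hteq, inv_mul_cancel₀ hty.ne']
    -- orthogonality: every v ⊥ x is ⊥ y
    have horth : ∀ v ∈ ((ℝ ∙ x)ᗮ : Submodule ℝ _), ⟪v, y⟫ = 0 := by
      have key : ∀ v ∈ ((ℝ ∙ x)ᗮ : Submodule ℝ _), ⟪v, y⟫ ≤ 0 := by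
        intro v hv
        rcases eq_or_ne v 0 with rfl | hv0
        · simp
        set δ := εx - ‖f - fx‖ with hδ
        have hδ0 : 0 < δ := by rw [hδ]; linarith [hnx]
        set c := δ / 2 * ‖v‖⁻¹ with hc
        have hc0 : 0 < c := by
          apply mul_pos (by linarith)
          exact inv_pos.mpr (norm_pos_iff.mpr hv0)
        have hwnorm : ‖c • v‖ = δ / 2 := by
          rw [norm_smul, Real.norm_eq_abs, abs_of_pos hc0, hc,
            mul_assoc, inv_mul_cancel₀ (norm_pos_iff.mpr hv0).ne', mul_one]
        have hvx : ⟪v, x⟫ = 0 := Submodule.mem_orthogonal_singleton_iff_inner_left.mp hv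
        have hcvx : ⟪c • v, x⟫ = (0:ℝ) := by
          rw [real_inner_smul_left, hvx, mul_zero]
        have hmem : f + c • v ∈ {f ∈ polarBody X | ⟪f, x⟫ = 1} := by
          apply hrelx
          · rw [inner_add_left, hcvx, hfx1, add_zero]
          · have : ‖f + c • v - fx‖ ≤ ‖f - fx‖ + ‖c • v‖ := by
              calc ‖f + c • v - fx‖ = ‖(f - fx) + c • v‖ := by
                    rw [add_sub_right_comm]
                _ ≤ ‖f - fx‖ + ‖c • v‖ := norm_add_le _ _
            rw [hwnorm] at this
            linarith
        have hcvy : ⟪c • v, y⟫ = c * ⟪v, y⟫ := real_inner_smul_left _ _ _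
        have hle1 : ⟪f + c • v, y⟫ ≤ 1 := hmem.1 y hyX
        rw [inner_add_left, hcvy, hfy1] at hle1
        nlinarith
      intro v hv
      have h1 := key v hv
      have h2 := key (-v) (neg_mem hv)
      rw [inner_neg_left] at h2
      linarith
    have hyspan : y ∈ (ℝ ∙ x) := by
      rw [← Submodule.orthogonal_orthogonal (ℝ ∙ x)]
      exact (Submodule.mem_orthogonal _ _).mpr horth
    obtain ⟨c, hcy⟩ := Submodule.mem_span_singleton.mp hyspan
    have : (1:ℝ) = c := by
      have := hfy1
      rw [← hcy, real_inner_smul_right, hfx1, mul_one] at this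
      exact this.symm
    rw [← hcy, ← this, one_smul]
  -- conclude countability
  choose! φ hφD hφP using claim1
  have hinj : Set.InjOn φ S := by
    intro x hx y hy hxy
    exact claim2 x hx y hy (φ x) (hφP x hx) (hxy ▸ hφP y hy)
  have himg : φ '' S ⊆ D := by
    rintro _ ⟨x, hx, rfl⟩
    exact hφD x hx
  have : (φ '' S).Countable := hDc.mono himg
  exact (Set.countable_of_injective_of_countable_image hinj this : S.Countable)
end

section
/- Let X ⊆ ℝⁿ be a compact convex body with 0 in its interior. The set of points of ∂X admitting a unique supporting hyperplane (the smooth points of the boundary) is dense in ∂X. -/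
open scoped RealInnerProductSpace MeasureTheory

/-- If a functional supports a closed ball at a boundary point of the ball, then it is a
positive multiple of the outward radius. -/
lemma ball_support_eq {n : ℕ} {p x f : EuclideanSpace ℝ (Fin n)} {r : ℝ} (hr : 0 < r)
    (hball : ∀ z, dist z p ≤ r → ⟪f, z⟫ ≤ 1) (hpx : dist p x = r) (hfx : ⟪f, x⟫ = 1) :
    r • f = ‖f‖ • (x - p) := by
  have hf0 : f ≠ 0 := by
    rintro rfl
    simp at hfx
  have hnf : 0 < ‖f‖ := norm_pos_iff.mpr hf0
  have hz : ⟪f, p + (r / ‖f‖) • f⟫ ≤ 1 := by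
    apply hball
    have hcanc : p + (r / ‖f‖) • f - p = (r / ‖f‖) • f := by abel
    rw [dist_eq_norm, hcanc, norm_smul, Real.norm_eq_abs, abs_of_pos (by positivity),
      div_mul_cancel₀ _ hnf.ne']
  have hz' : ⟪f, p⟫ + r * ‖f‖ ≤ 1 := by
    have := hz
    rw [inner_add_right, real_inner_smul_right, real_inner_self_eq_norm_mul_norm] at this
    calc ⟪f, p⟫ + r * ‖f‖ = ⟪f, p⟫ + r / ‖f‖ * (‖f‖ * ‖f‖) := by
          field_simp
      _ ≤ 1 := this
  have hxp : ‖x - p‖ = r := by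
    rw [← dist_eq_norm, dist_comm, hpx]
  have hcs : ⟪f, x - p⟫ = ‖f‖ * ‖x - p‖ := by
    have h1 : ⟪f, x - p⟫ ≥ ‖f‖ * ‖x - p‖ := by
      rw [inner_sub_right, hfx, hxp]
      nlinarith
    exact le_antisymm (real_inner_le_norm f (x - p)) h1
  have := inner_eq_norm_mul_iff_real.mp hcs
  rw [hxp] at this
  exact this

/-- Existence and uniqueness of the supporting functional at a point of the frontier which is
touched from inside by a ball. -/
lemma exists_unique_support {n : ℕ} {X : Set (EuclideanSpace ℝ (Fin n))}
    (hXv : Convex ℝ X) (hXcl : IsClosed X) (h0 : 0 ∈ interior X)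
    {p x : EuclideanSpace ℝ (Fin n)} {r : ℝ} (hr : 0 < r)
    (hball : Metric.closedBall p r ⊆ X) (hpx : dist p x = r) (hxf : x ∈ frontier X) :
    ∃! f : EuclideanSpace ℝ (Fin n), f ∈ polarBody X ∧ ⟪f, x⟫ = 1 := by
  -- Existence via Hahn–Banach separation from the interior.
  have hxint : x ∉ interior X := hxf.2
  obtain ⟨φ, hφ⟩ := geometric_hahn_banach_open_point (hXv.interior) isOpen_interior hxint
  have hφx : 0 < φ x := by
    have := hφ 0 h0
    simpa using this
  have hφle : ∀ z ∈ X, φ z ≤ φ x := by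
    intro z hz
    by_contra h
    push_neg at h
    -- pick t ∈ (0,1) with t * φ z > φ x
    have hφz : 0 < φ z := lt_trans hφx h
    set t : ℝ := (φ x / φ z + 1) / 2 with ht
    have ht0 : 0 < t := by positivity
    have ht1 : t < 1 := by
      have : φ x / φ z < 1 := (div_lt_one hφz).mpr h
      rw [ht]; linarith
    have hmem : (1 - t) • (0 : EuclideanSpace ℝ (Fin n)) + t • z ∈ interior X :=
      hXv.combo_interior_closure_mem_interior h0 (subset_closure hz) (by linarith) ht0.le
        (by ring)
    have := hφ _ hmem
    rw [smul_zero, zero_add, map_smul, smul_eq_mul] at this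
    have htz : φ x < t * φ z := by
      rw [ht]
      have : φ x / φ z * φ z = φ x := div_mul_cancel₀ _ hφz.ne'
      nlinarith
    linarith
  set v : EuclideanSpace ℝ (Fin n) := (InnerProductSpace.toDual ℝ _).symm φ with hv
  have hvz : ∀ z, ⟪v, z⟫ = φ z := fun z => InnerProductSpace.toDual_symm_apply
  refine ⟨(φ x)⁻¹ • v, ⟨?_, ?_⟩, ?_⟩
  · intro z hz
    rw [real_inner_smul_left, hvz]
    rw [inv_mul_le_iff₀ hφx, mul_one]
    exact hφle z hz
  · rw [real_inner_smul_left, hvz, inv_mul_cancel₀ hφx.ne']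
  · -- Uniqueness: any supporting functional is determined by the inner ball.
    intro g ⟨hg, hgx⟩
    have hb : ∀ h : EuclideanSpace ℝ (Fin n), h ∈ polarBody X → ⟪h, x⟫ = 1 →
        r • h = ‖h‖ • (x - p) := by
      intro h hh hhx
      exact ball_support_eq hr (fun z hz => hh z (hball hz)) hpx hhx
    set f₀ : EuclideanSpace ℝ (Fin n) := (φ x)⁻¹ • v with hf₀
    have hf₀p : f₀ ∈ polarBody X := by
      intro z hz
      rw [hf₀, real_inner_smul_left, hvz, inv_mul_le_iff₀ hφx, mul_one]
      exact hφle z hz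
    have hf₀x : ⟪f₀, x⟫ = 1 := by
      rw [hf₀, real_inner_smul_left, hvz, inv_mul_cancel₀ hφx.ne']
    have h1 : r • g = ‖g‖ • (x - p) := hb g hg hgx
    have h2 : r • f₀ = ‖f₀‖ • (x - p) := hb f₀ hf₀p hf₀x
    -- norms agree: r = ‖g‖ * ⟪x - p, x⟫ = ‖f₀‖ * ⟪x - p, x⟫
    have hw : ∀ h : EuclideanSpace ℝ (Fin n), ⟪h, x⟫ = 1 → r • h = ‖h‖ • (x - p) →
        r = ‖h‖ * ⟪x - p, x⟫ := by
      intro h hhx heq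
      have h3 : ⟪r • h, x⟫ = ⟪‖h‖ • (x - p), x⟫ := by rw [heq]
      rw [real_inner_smul_left, real_inner_smul_left, hhx, mul_one] at h3
      exact h3
    have hg' := hw g hgx h1
    have hf' := hw f₀ hf₀x h2
    have hwx : ⟪x - p, x⟫ ≠ 0 := by
      intro h
      rw [h, mul_zero] at hg'
      exact hr.ne' hg'
    have hnorm : ‖g‖ = ‖f₀‖ := by
      have := hg'.symm.trans hf'
      exact mul_right_cancel₀ hwx this
    have : r • g = r • f₀ := by rw [h1, h2, hnorm]
    exact smul_right_injective _ hr.ne' this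

theorem smooth_points_dense {n : ℕ} (X : Set (EuclideanSpace ℝ (Fin n)))
    (hXc : IsCompact X) (hXv : Convex ℝ X) (h0 : 0 ∈ interior X) :
    ∀ y ∈ frontier X,
      y ∈ closure {x ∈ frontier X |
        ∃! f : EuclideanSpace ℝ (Fin n), f ∈ polarBody X ∧ ⟪f, x⟫ = 1} := by
  intro y hy
  have hXcl : IsClosed X := hXc.isClosed
  rw [Metric.mem_closure_iff]
  intro ε hε
  have hycc : y ∈ closure Xᶜ := by
    rw [frontier_eq_closure_inter_closure] at hy
    exact hy.2
  -- choose an interior point p close to y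
  have hy0 : y ≠ 0 := by
    intro h
    exact hy.2 (h ▸ h0)
  set δ : ℝ := min (1/2) (ε / (2 * ‖y‖ + 2)) with hδdef
  have hδ0 : 0 < δ := lt_min (by norm_num) (by positivity)
  have hδ1 : δ ≤ 1 / 2 := min_le_left _ _
  set p : EuclideanSpace ℝ (Fin n) := (1 - δ) • y with hp
  have hpint : p ∈ interior X := by
    have := hXv.combo_interior_closure_mem_interior h0 hy.1 hδ0
      (by linarith : (0:ℝ) ≤ 1 - δ) (by ring)
    simpa [hp] using this
  have hpy : dist p y = δ * ‖y‖ := by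
    rw [hp, dist_eq_norm]
    have : (1 - δ) • y - y = (-δ) • y := by
      rw [sub_smul, one_smul, neg_smul]; abel
    rw [this, norm_smul, Real.norm_eq_abs, abs_neg, abs_of_pos hδ0]
  have hδy : δ * ‖y‖ < ε / 2 := by
    have h1 : δ ≤ ε / (2 * ‖y‖ + 2) := min_le_right _ _
    have h2 : δ * ‖y‖ ≤ ε / (2 * ‖y‖ + 2) * ‖y‖ :=
      mul_le_mul_of_nonneg_right h1 (norm_nonneg y)
    have h3 : ε / (2 * ‖y‖ + 2) * ‖y‖ < ε / 2 := by
      rw [div_mul_eq_mul_div, div_lt_div_iff₀ (by positivity) (by norm_num)]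
      nlinarith [norm_pos_iff.mpr hy0]
    linarith
  set r : ℝ := Metric.infDist p Xᶜ with hrdef
  have hr0 : 0 < r := by
    rw [hrdef, ← Metric.infDist_closure]
    rw [← (isClosed_closure (s := Xᶜ)).notMem_iff_infDist_pos ⟨y, hycc⟩,
      closure_compl]
    simp [hpint]
  have hrle : r ≤ δ * ‖y‖ := by
    rw [hrdef, ← Metric.infDist_closure, ← hpy]
    exact Metric.infDist_le_dist_of_mem hycc
  have hball : Metric.closedBall p r ⊆ X := by
    have hopen : Metric.ball p r ⊆ X := by
      intro z hz
      by_contra h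
      have : r ≤ dist p z := Metric.infDist_le_dist_of_mem h
      rw [Metric.mem_ball, dist_comm] at hz
      linarith
    calc Metric.closedBall p r = closure (Metric.ball p r) :=
          (closure_ball p hr0.ne').symm
      _ ⊆ closure X := closure_mono hopen
      _ = X := hXcl.closure_eq
  -- nearest point of the complement
  obtain ⟨x, hxmem, hxd⟩ := (isClosed_closure (s := Xᶜ)).exists_infDist_eq_dist ⟨y, hycc⟩ p
  rw [Metric.infDist_closure, ← hrdef] at hxd
  have hxX : x ∈ X := hball (by rw [Metric.mem_closedBall, dist_comm, ← hxd])
  have hxfr : x ∈ frontier X := by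
    rw [frontier_eq_closure_inter_closure]
    exact ⟨subset_closure hxX, hxmem⟩
  refine ⟨x, ⟨hxfr, ?_⟩, ?_⟩
  · exact exists_unique_support hXv hXcl h0 hr0 hball hxd.symm hxfr
  · have : dist y x ≤ dist y p + dist p x := dist_triangle y p x
    rw [← hxd, dist_comm y p, hpy] at this
    calc dist y x ≤ δ * ‖y‖ + r := this
      _ ≤ δ * ‖y‖ + δ * ‖y‖ := by linarith
      _ < ε := by linarith
end
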